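/- Let μ ∈ [0, 1/2], m₀ = √(2(1−μ)) and θ̄ ∈ ℝ. Define α_h(τ) = 2 arctan(tanh(m₀τ/4)) and θ_h(τ) = θ̄ + π + 2α_h(τ) for τ ∈ ℝ. Then (θ_h, α_h) is a solution of the system θ' = m₀ cos α, α' = (m₀/2) cos α on all of ℝ, and it is a heteroclinic orbit between the two circles of equilibria: α_h(τ) → −π/2 and θ_h(τ) → θ̄ as τ → −∞, while α_h(τ) → π/2 and θ_h(τ) → θ̄ + 2π (i.e. θ̄ modulo 2π) as τ → +∞. -/

import Mathlib

open Real Filter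
open scoped Topology

/-- The `α`-component of the heteroclinic orbit inside the collision manifold. -/
noncomputable def alphaHet (m0 τ : ℝ) : ℝ := 2 * Real.arctan (Real.tanh (m0 * τ / 4))

/-- The `θ`-component of the heteroclinic orbit inside the collision manifold. -/
noncomputable def thetaHet (θb m0 τ : ℝ) : ℝ := θb + π + 2 * alphaHet m0 τ

lemma my_hasDerivAt_tanh (x : ℝ) : HasDerivAt Real.tanh (1 / Real.cosh x ^ 2) x := by
  have h : HasDerivAt (fun x => Real.sinh x / Real.cosh x)
      ((Real.cosh x * Real.cosh x - Real.sinh x * Real.sinh x) / Real.cosh x ^ 2) x :=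
    (Real.hasDerivAt_sinh x).div (Real.hasDerivAt_cosh x) (Real.cosh_pos x).ne'
  have h2 : Real.cosh x * Real.cosh x - Real.sinh x * Real.sinh x = 1 := by
    have := Real.cosh_sq_sub_sinh_sq x; nlinarith [this]
  have hfun : Real.tanh = fun x => Real.sinh x / Real.cosh x :=
    funext fun x => Real.tanh_eq_sinh_div_cosh x
  rw [hfun]
  simpa [h2] using h

lemma my_tanh_eq (x : ℝ) : Real.tanh x = 1 - 2 / (Real.exp (2 * x) + 1) := by
  have hc := (Real.cosh_pos x).ne'
  have he : Real.exp (2 * x) + 1 > 0 := by positivity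
  rw [Real.tanh_eq_sinh_div_cosh, Real.sinh_eq, Real.cosh_eq]
  rw [two_mul, Real.exp_add]
  have hne : Real.exp x ≠ 0 := Real.exp_ne_zero x
  have hsum : Real.exp x + Real.exp (-x) ≠ 0 := by positivity
  rw [Real.exp_neg]
  field_simp
  ring

lemma my_tendsto_tanh_atTop : Tendsto Real.tanh atTop (𝓝 1) := by
  have h1 : Tendsto (fun x : ℝ => Real.exp (2 * x) + 1) atTop atTop :=
    (Real.tendsto_exp_atTop.comp (tendsto_id.const_mul_atTop two_pos)).atTop_add tendsto_const_nhds
  have h2 : Tendsto (fun x : ℝ => 1 - 2 / (Real.exp (2 * x) + 1)) atTop (𝓝 (1 - 0)) :=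
    tendsto_const_nhds.sub (tendsto_const_nhds.div_atTop h1)
  have := sub_zero (1:ℝ)
  rw [this] at h2
  exact h2.congr fun x => (my_tanh_eq x).symm

lemma my_tendsto_tanh_atBot : Tendsto Real.tanh atBot (𝓝 (-1)) := by
  have h1 : Tendsto (fun x : ℝ => Real.exp (2 * x) + 1) atBot (𝓝 (0 + 1)) :=
    (Real.tendsto_exp_atBot.comp (tendsto_id.const_mul_atBot two_pos)).add tendsto_const_nhds
  have h2 : Tendsto (fun x : ℝ => 1 - 2 / (Real.exp (2 * x) + 1)) atBot (𝓝 (1 - 2 / (0 + 1))) :=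
    tendsto_const_nhds.sub (tendsto_const_nhds.div h1 (by norm_num))
  have : (1 : ℝ) - 2 / (0 + 1) = -1 := by norm_num
  rw [this] at h2
  exact h2.congr fun x => (my_tanh_eq x).symm

lemma cos_alphaHet (m0 τ : ℝ) :
    Real.cos (alphaHet m0 τ) =
      (1 - Real.tanh (m0 * τ / 4) ^ 2) / (1 + Real.tanh (m0 * τ / 4) ^ 2) := by
  set t := Real.tanh (m0 * τ / 4)
  have ht : (0:ℝ) < 1 + t ^ 2 := by positivity
  rw [alphaHet, Real.cos_two_mul, Real.cos_arctan]
  have hsq : Real.sqrt (1 + t ^ 2) ^ 2 = 1 + t ^ 2 := Real.sq_sqrt ht.le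
  field_simp
  nlinarith [hsq, Real.sqrt_pos.mpr ht]

lemma alphaHet_deriv (m0 τ : ℝ) :
    HasDerivAt (alphaHet m0) (m0 / 2 * Real.cos (alphaHet m0 τ)) τ := by
  set u := m0 * τ / 4 with hu
  have hinner : HasDerivAt (fun τ : ℝ => m0 * τ / 4) (m0 / 4) τ := by
    simpa using ((hasDerivAt_id τ).const_mul m0).div_const 4
  have htanh : HasDerivAt (fun τ : ℝ => Real.tanh (m0 * τ / 4))
      (1 / Real.cosh u ^ 2 * (m0 / 4)) τ := by
    have := (my_hasDerivAt_tanh u).comp τ hinner; exact this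
  have harctan : HasDerivAt (fun τ : ℝ => Real.arctan (Real.tanh (m0 * τ / 4)))
      (1 / (1 + Real.tanh u ^ 2) * (1 / Real.cosh u ^ 2 * (m0 / 4))) τ :=
    by have := (Real.hasDerivAt_arctan (Real.tanh u)).comp τ htanh; exact this
  have h : HasDerivAt (alphaHet m0)
      (2 * (1 / (1 + Real.tanh u ^ 2) * (1 / Real.cosh u ^ 2 * (m0 / 4)))) τ := by
    exact harctan.const_mul 2
  convert h using 1
  rw [cos_alphaHet]
  have hc := (Real.cosh_pos u).ne'
  have h1t : 1 - Real.tanh u ^ 2 = 1 / Real.cosh u ^ 2 := by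
    rw [Real.tanh_eq_sinh_div_cosh]
    have h := Real.cosh_sq_sub_sinh_sq u
    field_simp
    try nlinarith [h]
  rw [← hu, ← h1t]
  have ht : (0:ℝ) < 1 + Real.tanh u ^ 2 := by positivity
  field_simp
  ring

lemma alphaHet_tendsto_atTop {m0 : ℝ} (hm : 0 < m0) :
    Tendsto (alphaHet m0) atTop (𝓝 (π / 2)) := by
  have hlin : Tendsto (fun τ : ℝ => m0 * τ / 4) atTop atTop := by
    apply Tendsto.atTop_div_const (by norm_num)
    exact tendsto_id.const_mul_atTop hm
  have h : Tendsto (fun τ : ℝ => Real.arctan (Real.tanh (m0 * τ / 4))) atTop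
      (𝓝 (Real.arctan 1)) :=
    (Real.continuous_arctan.continuousAt.tendsto.comp (my_tendsto_tanh_atTop.comp hlin))
  have h2 := h.const_mul (2:ℝ)
  have he : (2:ℝ) * Real.arctan 1 = π / 2 := by rw [Real.arctan_one]; ring
  rw [he] at h2
  exact h2.congr fun τ => by simp [alphaHet]

lemma alphaHet_tendsto_atBot {m0 : ℝ} (hm : 0 < m0) :
    Tendsto (alphaHet m0) atBot (𝓝 (-(π / 2))) := by
  have hlin : Tendsto (fun τ : ℝ => m0 * τ / 4) atBot atBot := by
    apply Tendsto.atBot_div_const (by norm_num)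
    exact (tendsto_id.const_mul_atBot hm)
  have h : Tendsto (fun τ : ℝ => Real.arctan (Real.tanh (m0 * τ / 4))) atBot
      (𝓝 (Real.arctan (-1))) :=
    (Real.continuous_arctan.continuousAt.tendsto.comp (my_tendsto_tanh_atBot.comp hlin))
  have h2 := h.const_mul (2:ℝ)
  have : (2:ℝ) * Real.arctan (-1) = -(π / 2) := by
    rw [Real.arctan_neg, Real.arctan_one]; ring
  rw [this] at h2
  exact h2.congr fun τ => by simp [alphaHet]

/-- For `μ ∈ [0,1/2]`, `m₀ = √(2(1-μ))` and any `θ̄`, the curve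
`(θ_h, α_h)(τ) = (θ̄ + π + 2α_h(τ), 2 arctan(tanh(m₀τ/4)))` solves
`θ' = m₀ cos α`, `α' = (m₀/2) cos α` on all of `ℝ`, and is heteroclinic between the
two circles of equilibria: `α_h → ∓π/2` and `θ_h → θ̄` (resp. `θ̄ + 2π`) as `τ → ∓∞`. -/
theorem heteroclinic_inside_collision_manifold
    (μ : ℝ) (hμ : μ ∈ Set.Icc (0 : ℝ) (1 / 2)) (θb : ℝ) :
    (∀ τ : ℝ, HasDerivAt (thetaHet θb (Real.sqrt (2 * (1 - μ))))
      (Real.sqrt (2 * (1 - μ)) * Real.cos (alphaHet (Real.sqrt (2 * (1 - μ))) τ)) τ) ∧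
    (∀ τ : ℝ, HasDerivAt (alphaHet (Real.sqrt (2 * (1 - μ))))
      (Real.sqrt (2 * (1 - μ)) / 2 * Real.cos (alphaHet (Real.sqrt (2 * (1 - μ))) τ)) τ) ∧
    Tendsto (alphaHet (Real.sqrt (2 * (1 - μ)))) atBot (𝓝 (-(π / 2))) ∧
    Tendsto (thetaHet θb (Real.sqrt (2 * (1 - μ)))) atBot (𝓝 θb) ∧
    Tendsto (alphaHet (Real.sqrt (2 * (1 - μ)))) atTop (𝓝 (π / 2)) ∧
    Tendsto (thetaHet θb (Real.sqrt (2 * (1 - μ)))) atTop (𝓝 (θb + 2 * π)) := by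
  set m0 := Real.sqrt (2 * (1 - μ)) with hm0
  have hm : 0 < m0 := Real.sqrt_pos.mpr (by nlinarith [hμ.2])
  have hθ : ∀ τ, HasDerivAt (thetaHet θb m0) (m0 * Real.cos (alphaHet m0 τ)) τ := by
    intro τ
    have h := ((alphaHet_deriv m0 τ).const_mul 2).const_add (θb + π)
    have he : (2:ℝ) * (m0 / 2 * Real.cos (alphaHet m0 τ)) = m0 * Real.cos (alphaHet m0 τ) := by
      ring
    rw [he] at h
    exact h
  refine ⟨hθ, fun τ => alphaHet_deriv m0 τ, alphaHet_tendsto_atBot hm, ?_,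
    alphaHet_tendsto_atTop hm, ?_⟩
  · have h := ((alphaHet_tendsto_atBot hm).const_mul (2:ℝ)).const_add (θb + π)
    have : θb + π + 2 * -(π / 2) = θb := by ring
    rw [this] at h
    exact h.congr fun τ => rfl
  · have h := ((alphaHet_tendsto_atTop hm).const_mul (2:ℝ)).const_add (θb + π)
    have : θb + π + 2 * (π / 2) = θb + 2 * π := by ring
    rw [this] at h
    exact h.congr fun τ => rfl
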